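/- Let q be even, let J = {j_0,...,j_{k-1}} and I = {i_0,...,i_{m-k-1}} partition {0,1,...,m-1}, and write x = (x_{j_0},...,x_{j_{k-1}}). Let f : Z_2^m → Z_q be a generalized Boolean function such that for each d ∈ Z_2^k the restricted function f|_{x=d} equals (q/2)·Σ_{α=0}^{m-k-2} x_{π_d(α)} x_{π_d(α+1)} + Σ_{α=0}^{m-k-1} c_{d,α} x_{i_α} + c_d, where π_d is a bijection from {0,...,m-k-1} onto I and c_{d,α}, c_d ∈ Z_q. For each d define a_d to be either π_d(0) or π_d(m-k-1), and set e = Σ_{d ∈ Z_2^k} x_{a_d} · Π_{α=0}^{k-1} x_{j_α}^{d_α}(1 - x_{j_α})^{1-d_α}. Then the 2^{k+1} polyphase vectors associated with the functions f + (q/2)(Σ_{α=0}^{k-1} c_α x_{j_α} + c'·e), as (c_0,...,c_{k-1}, c') ranges over Z_2^{k+1}, form a complementary set of size 2^{k+1}: the sum over all 2^{k+1} vectors of their aperiodic autocorrelations is zero at every nonzero displacement. -/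

import Mathlib

open Finset

/-- Aperiodic cross-correlation of two length-`n` complex sequences at integer displacement `ℓ`. -/
noncomputable def crossCorr (n : ℕ) (A B : ℕ → ℂ) (ℓ : ℤ) : ℂ :=
  ∑ i ∈ Finset.range n, ∑ j ∈ Finset.range n,
    if (i : ℤ) = (j : ℤ) + ℓ then A i * (starRingEnd ℂ) (B j) else 0

/-- Aperiodic autocorrelation. -/
noncomputable def autoCorr (n : ℕ) (A : ℕ → ℂ) (ℓ : ℤ) : ℂ := crossCorr n A A ℓ

/-- The binary expansion of `i`, as a point of `ℤ₂^m`. -/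
def bits (m : ℕ) (i : ℕ) : Fin m → ZMod 2 := fun j => if Nat.testBit i j.val then 1 else 0

/-- The polyphase vector `F = ξ^f` associated with `f : ℤ₂^m → ℤ_q`, `ξ = e^{2π√-1/q}`. -/
noncomputable def polyVec {q : ℕ} (m : ℕ) (f : (Fin m → ZMod 2) → ZMod q) : ℕ → ℂ :=
  fun i => Complex.exp (2 * Real.pi * Complex.I * ((f (bits m i)).val : ℂ) / (q : ℂ))

/-- The (0/1-valued) function `e = ∑_{d ∈ ℤ₂^k} x_{a_d} ∏_{α<k} x_{j_α}^{d_α}(1-x_{j_α})^{1-d_α}`,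
computed in `ℕ`. -/
def eFun (m k : ℕ) (jJ : Fin k → Fin m) (aD : (Fin k → ZMod 2) → Fin m)
    (y : Fin m → ZMod 2) : ℕ :=
  ∑ d : Fin k → ZMod 2, (y (aD d)).val *
    ∏ b : Fin k, (y (jJ b)).val ^ (d b).val * (1 - (y (jJ b)).val) ^ (1 - (d b).val)

section AuxLemmas
open Complex

noncomputable def chi (q : ℕ) (a : ZMod q) : ℂ :=
  Complex.exp (2 * Real.pi * Complex.I * (a.val : ℂ) / (q : ℂ))

lemma chi_natCast (q : ℕ) [NeZero q] (N : ℕ) :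
    chi q (N : ZMod q) = Complex.exp (2 * Real.pi * Complex.I * (N : ℂ) / (q : ℂ)) := by
  have hq : (q : ℂ) ≠ 0 := Nat.cast_ne_zero.2 (NeZero.ne q)
  have h1 : ((N : ZMod q)).val = N % q := ZMod.val_natCast q N
  have h2 : (N : ℂ) = (q : ℂ) * (N / q : ℕ) + ((N % q : ℕ) : ℂ) := by
    exact_mod_cast (Nat.div_add_mod N q).symm
  rw [chi, h1, h2]
  rw [show 2 * Real.pi * Complex.I * ((q : ℂ) * (N / q : ℕ) + ((N % q : ℕ) : ℂ)) / q
      = 2 * Real.pi * Complex.I * ((N % q : ℕ) : ℂ) / q + (N / q : ℕ) * (2 * Real.pi * Complex.I)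
      from by field_simp; ring]
  rw [Complex.exp_add, Complex.exp_nat_mul_two_pi_mul_I, mul_one]

lemma chi_add (q : ℕ) [NeZero q] (a b : ZMod q) : chi q (a + b) = chi q a * chi q b := by
  have ha : a = ((a.val : ℕ) : ZMod q) := (ZMod.natCast_rightInverse a).symm
  have hb : b = ((b.val : ℕ) : ZMod q) := (ZMod.natCast_rightInverse b).symm
  rw [ha, hb, ← Nat.cast_add, chi_natCast, chi_natCast, chi_natCast, ← Complex.exp_add]
  congr 1
  push_cast
  ring

lemma chi_zero (q : ℕ) [NeZero q] : chi q 0 = 1 := by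
  simp [chi, ZMod.val_zero]

lemma chi_ne_zero (q : ℕ) (a : ZMod q) : chi q a ≠ 0 := Complex.exp_ne_zero _

lemma conj_chi (q : ℕ) [NeZero q] (a : ZMod q) :
    (starRingEnd ℂ) (chi q a) = chi q (-a) := by
  have h1 : chi q a * chi q (-a) = 1 := by
    rw [← chi_add, add_neg_cancel, chi_zero]
  have h2 : chi q a * (starRingEnd ℂ) (chi q a) = 1 := by
    rw [chi, ← Complex.exp_conj]
    rw [← Complex.exp_add]
    rw [show (starRingEnd ℂ) (2 * Real.pi * Complex.I * (a.val : ℂ) / q)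
        = -(2 * Real.pi * Complex.I * (a.val : ℂ) / q) from by
      simp only [map_div₀, map_mul, Complex.conj_I, Complex.conj_ofReal, map_natCast,
        map_ofNat]
      ring]
    simp
  exact mul_left_cancel₀ (chi_ne_zero q a) (h2.trans h1.symm)

lemma chi_sub_conj (q : ℕ) [NeZero q] (a b : ZMod q) :
    chi q a * (starRingEnd ℂ) (chi q b) = chi q (a - b) := by
  rw [conj_chi, ← chi_add, sub_eq_add_neg]

lemma chi_half (q : ℕ) [NeZero q] (hq : Even q) (N : ℕ) :
    chi q (((q / 2 : ℕ) : ZMod q) * (N : ZMod q)) = (-1 : ℂ) ^ N := by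
  obtain ⟨t, ht⟩ := hq
  have hq1 : 0 < q := Nat.pos_of_ne_zero (NeZero.ne q)
  have ht2 : q = 2 * t := by omega
  have htpos : 0 < t := by omega
  have hqd : q / 2 = t := by omega
  rw [← Nat.cast_mul, chi_natCast]
  have : 2 * Real.pi * Complex.I * ((q / 2 * N : ℕ) : ℂ) / q = N * (Real.pi * Complex.I) := by
    have hqc : (q : ℂ) = 2 * t := by exact_mod_cast congrArg (Nat.cast : ℕ → ℂ) ht2
    have htc : (t : ℂ) ≠ 0 := Nat.cast_ne_zero.2 htpos.ne'
    rw [hqd, hqc]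
    push_cast
    field_simp
  rw [this, Complex.exp_nat_mul, Complex.exp_pi_mul_I]
lemma neg_one_pow_congr' (a b : ℕ) (h : (a : ZMod 2) = (b : ZMod 2)) :
    ((-1 : ℂ)) ^ a = (-1 : ℂ) ^ b := by
  have hm : a % 2 = b % 2 := by rwa [ZMod.natCast_eq_natCast_iff, Nat.ModEq] at h
  have key : ∀ n : ℕ, ((-1 : ℂ)) ^ n = (-1 : ℂ) ^ (n % 2) := by
    intro n
    conv_lhs => rw [← Nat.mod_add_div n 2]
    rw [pow_add, pow_mul, neg_one_sq, one_pow, mul_one]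
  rw [key a, key b, hm]

lemma sum_zmod2 {M : Type*} [AddCommMonoid M] (f : ZMod 2 → M) :
    ∑ b : ZMod 2, f b = f 0 + f 1 := by
  rw [show (univ : Finset (ZMod 2)) = {0, 1} from by decide]
  rw [Finset.sum_insert (by decide), Finset.sum_singleton]

lemma zmod2_cases (z : ZMod 2) : z = 0 ∨ z = 1 := by revert z; decide

lemma eFun_eq (m k : ℕ) (jJ : Fin k → Fin m) (aD : (Fin k → ZMod 2) → Fin m)
    (y : Fin m → ZMod 2) :
    eFun m k jJ aD y = (y (aD (fun b => y (jJ b)))).val := by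
  rw [eFun]
  rw [Finset.sum_eq_single (fun b => y (jJ b))]
  · rw [Finset.prod_eq_one, mul_one]
    intro b _
    have : ∀ z : ZMod 2, z.val ^ z.val * (1 - z.val) ^ (1 - z.val) = 1 := by decide
    exact this (y (jJ b))
  · intro d _ hd
    have : ∃ b, d b ≠ y (jJ b) := by
      by_contra hc
      push_neg at hc
      exact hd (funext hc)
    obtain ⟨b, hb⟩ := this
    rw [Finset.prod_eq_zero (Finset.mem_univ b), mul_zero]
    have : ∀ z w : ZMod 2, z ≠ w → w.val ^ z.val * (1 - w.val) ^ (1 - z.val) = 0 := by decide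
    exact this (d b) (y (jJ b)) hb
  · intro h
    exact absurd (Finset.mem_univ _) h

-- parity of val sums
lemma even_val_add_iff (x y : ZMod 2) : Even (x.val + y.val) ↔ x = y := by revert x y; decide

lemma ne_zmod2_add_eq_one (x y : ZMod 2) (h : x ≠ y) : x + y = 1 := by revert x y; decide

-- bits lemmas
lemma bits_eq_iff (m i j : ℕ) (hi : i < 2 ^ m) (hj : j < 2 ^ m)
    (h : ∀ t : Fin m, bits m i t = bits m j t) : i = j := by
  apply Nat.eq_of_testBit_eq
  intro n
  by_cases hn : n < m
  · have := h ⟨n, hn⟩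
    simp only [bits] at this
    by_cases hb : Nat.testBit i n <;> by_cases hb' : Nat.testBit j n <;>
      simp [hb, hb'] at this ⊢
  · push_neg at hn
    rw [Nat.testBit_lt_two_pow (lt_of_lt_of_le hi (Nat.pow_le_pow_right (by norm_num) hn)),
      Nat.testBit_lt_two_pow (lt_of_lt_of_le hj (Nat.pow_le_pow_right (by norm_num) hn))]

lemma ofBits (m x : ℕ) (h : x < 2 ^ m) :
    (x : ℤ) = ∑ t ∈ Finset.range m, ((x.testBit t).toNat : ℤ) * 2 ^ t := by
  induction m generalizing x with
  | zero => interval_cases x; simp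
  | succ m ih =>
    have hx2 : x / 2 < 2 ^ m := by omega
    have := ih (x / 2) hx2
    rw [Finset.sum_range_succ']
    simp only [Nat.testBit_succ]
    have hterm : ∀ t, ((x / 2).testBit t).toNat = (x.testBit (t+1)).toNat := by
      intro t; rw [Nat.testBit_succ]
    calc (x : ℤ) = 2 * ((x / 2 : ℕ) : ℤ) + ((x % 2 : ℕ) : ℤ) := by
          push_cast; omega
      _ = _ := by
        rw [this]
        rw [Finset.mul_sum]
        congr 1
        · apply Finset.sum_congr rfl
          intro t _
          ring
        · rcases Nat.mod_two_eq_zero_or_one x with h | h <;>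
            simp [Nat.testBit_zero, h]

lemma bits_xor (m i : ℕ) (p : Fin m) (t : Fin m) :
    bits m (i ^^^ 2 ^ p.val) t = bits m i t + (if t = p then 1 else 0) := by
  simp only [bits, Nat.testBit_xor]
  by_cases htp : t = p
  · subst htp
    rw [Nat.testBit_two_pow_self]
    by_cases hb : i.testBit t.val <;> simp [hb] <;> decide
  · have : p.val ≠ t.val := fun h => htp (Fin.ext h.symm)
    rw [Nat.testBit_two_pow_of_ne this]
    by_cases hb : i.testBit t.val <;> simp [hb, htp]

lemma bits_eq_iff_testBit (m i j : ℕ) (t : Fin m) :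
    bits m i t = bits m j t ↔ i.testBit t.val = j.testBit t.val := by
  simp only [bits]
  by_cases hb : i.testBit t.val <;> by_cases hb' : j.testBit t.val <;> simp [hb, hb']

lemma xor_flip_int (m p i : ℕ) (hi : i < 2 ^ m) (hp : p < m) :
    ((i ^^^ 2 ^ p : ℕ) : ℤ) =
      (i : ℤ) + (if i.testBit p then -(2 ^ p : ℤ) else (2 ^ p : ℤ)) := by
  have h2p : 2 ^ p < 2 ^ m := Nat.pow_lt_pow_right (by norm_num) hp
  have hi' : i ^^^ 2 ^ p < 2 ^ m := Nat.xor_lt_two_pow hi h2p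
  rw [ofBits m _ hi', ofBits m i hi]
  have hpmem : p ∈ Finset.range m := Finset.mem_range.2 hp
  rw [← Finset.sum_erase_add _ _ hpmem, ← Finset.sum_erase_add _ _ hpmem]
  have heq : ∀ t ∈ (Finset.range m).erase p,
      (((i ^^^ 2 ^ p).testBit t).toNat : ℤ) * 2 ^ t = ((i.testBit t).toNat : ℤ) * 2 ^ t := by
    intro t ht
    have htp : p ≠ t := fun h => (Finset.mem_erase.1 ht).1 h.symm
    rw [Nat.testBit_xor, Nat.testBit_two_pow_of_ne htp]
    simp
  rw [Finset.sum_congr rfl heq]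
  have : (i ^^^ 2 ^ p).testBit p = !(i.testBit p) := by
    rw [Nat.testBit_xor, Nat.testBit_two_pow_self]
    cases i.testBit p <;> simp
  rw [this]
  cases hb : i.testBit p <;> simp [hb]
lemma rev_quad {m : ℕ} (M : ℕ) (σ : ℕ → Fin m) (y : Fin m → ZMod 2) :
    ∑ α ∈ Finset.range (M - 1), (y (σ (M - 1 - α))).val * (y (σ (M - 1 - (α + 1)))).val
    = ∑ α ∈ Finset.range (M - 1), (y (σ α)).val * (y (σ (α + 1))).val := by
  refine Finset.sum_nbij' (i := fun α => M - 2 - α) (j := fun α => M - 2 - α)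
    (fun a ha => by simp only [Finset.mem_range] at ha ⊢; omega)
    (fun a ha => by simp only [Finset.mem_range] at ha ⊢; omega)
    (fun a ha => by simp only [Finset.mem_range] at ha; show M - 2 - (M - 2 - a) = a; omega)
    (fun a ha => by simp only [Finset.mem_range] at ha; show M - 2 - (M - 2 - a) = a; omega)
    (fun a ha => ?_)
  simp only [Finset.mem_range] at ha
  show (y (σ (M - 1 - a))).val * (y (σ (M - 1 - (a + 1)))).val
      = (y (σ (M - 2 - a))).val * (y (σ (M - 2 - a + 1))).val
  rw [show M - 1 - a = M - 2 - a + 1 from by omega, show M - 1 - (a + 1) = M - 2 - a from by omega]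
  ring

lemma nat_find_congr {P Q : ℕ → Prop} [DecidablePred P] [DecidablePred Q]
    (hP : ∃ n, P n) (hQ : ∃ n, Q n) (h : ∀ n, P n ↔ Q n) : Nat.find hP = Nat.find hQ :=
  le_antisymm (Nat.find_min' hP ((h _).2 (Nat.find_spec hQ)))
    (Nat.find_min' hQ ((h _).1 (Nat.find_spec hP)))

section aux

variable (m k : ℕ) (jJ : Fin k → Fin m) (π₂ : (Fin k → ZMod 2) → ℕ → Fin m)

def ddp (p : ℕ × ℕ) : Fin k → ZMod 2 := fun b => bits m p.1 (jJ b)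

noncomputable def a0 (p : ℕ × ℕ) : ℕ :=
  Nat.find (⟨m - k, Or.inl rfl⟩ : ∃ α, α = m - k ∨ (α < m - k ∧
    bits m p.1 (π₂ (ddp m k jJ p) α) ≠ bits m p.2 (π₂ (ddp m k jJ p) α)))

noncomputable def gg (p : ℕ × ℕ) : ℕ × ℕ :=
  (p.1 ^^^ 2 ^ (π₂ (ddp m k jJ p) (a0 m k jJ π₂ p - 1)).val,
   p.2 ^^^ 2 ^ (π₂ (ddp m k jJ p) (a0 m k jJ π₂ p - 1)).val)

lemma a0_spec (p : ℕ × ℕ)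
    (h : ∃ α, α < m - k ∧ bits m p.1 (π₂ (ddp m k jJ p) α) ≠ bits m p.2 (π₂ (ddp m k jJ p) α)) :
    a0 m k jJ π₂ p < m - k ∧
    bits m p.1 (π₂ (ddp m k jJ p) (a0 m k jJ π₂ p)) ≠
      bits m p.2 (π₂ (ddp m k jJ p) (a0 m k jJ π₂ p)) ∧
    ∀ β < a0 m k jJ π₂ p,
      bits m p.1 (π₂ (ddp m k jJ p) β) = bits m p.2 (π₂ (ddp m k jJ p) β) := by
  have h0 : ∃ α, α = m - k ∨ (α < m - k ∧
      bits m p.1 (π₂ (ddp m k jJ p) α) ≠ bits m p.2 (π₂ (ddp m k jJ p) α)) := ⟨m - k, Or.inl rfl⟩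
  have ha : a0 m k jJ π₂ p = Nat.find h0 := rfl
  obtain ⟨α, hα, hne⟩ := h
  have hle : Nat.find h0 ≤ α := Nat.find_min' _ (Or.inr ⟨hα, hne⟩)
  have hlt : Nat.find h0 < m - k := lt_of_le_of_lt hle hα
  have hspec := Nat.find_spec h0
  rw [ha]
  rcases hspec with h1 | h2
  · exact absurd h1 (by omega)
  · refine ⟨hlt, h2.2, fun β hβ => ?_⟩
    have hmin := Nat.find_min h0 hβ
    push_neg at hmin
    exact hmin.2 (by omega)

lemma a0_congr (p p' : ℕ × ℕ) (h1 : ddp m k jJ p = ddp m k jJ p')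
    (h : ∀ α, (bits m p.1 (π₂ (ddp m k jJ p) α) = bits m p.2 (π₂ (ddp m k jJ p) α))
        ↔ (bits m p'.1 (π₂ (ddp m k jJ p') α) = bits m p'.2 (π₂ (ddp m k jJ p') α))) :
    a0 m k jJ π₂ p = a0 m k jJ π₂ p' := by
  refine nat_find_congr _ _ fun n => ?_
  constructor
  · rintro (hl | ⟨hn, hne⟩)
    · exact Or.inl hl
    · exact Or.inr ⟨hn, fun hc => hne ((h n).2 hc)⟩
  · rintro (hl | ⟨hn, hne⟩)
    · exact Or.inl hl
    · exact Or.inr ⟨hn, fun hc => hne ((h n).1 hc)⟩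

end aux
lemma pair_sum (q k : ℕ) [NeZero q] (hq : Even q) {m : ℕ} (jJ : Fin k → Fin m)
    (aD : (Fin k → ZMod 2) → Fin m) (F G : ZMod q) (u v : Fin m → ZMod 2) :
    (∑ cc : Fin k → ZMod 2, ∑ c' : ZMod 2,
      chi q (F + ((q / 2 : ℕ) : ZMod q) *
          (((∑ α : Fin k, (cc α).val * (u (jJ α)).val) + c'.val * eFun m k jJ aD u : ℕ) : ZMod q)) *
      (starRingEnd ℂ) (chi q (G + ((q / 2 : ℕ) : ZMod q) *
          (((∑ α : Fin k, (cc α).val * (v (jJ α)).val) + c'.val * eFun m k jJ aD v : ℕ) : ZMod q)))) =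
    if (∀ b : Fin k, u (jJ b) = v (jJ b)) ∧ Even (eFun m k jJ aD u + eFun m k jJ aD v)
    then (2 ^ (k + 1) : ℂ) * (chi q F * (starRingEnd ℂ) (chi q G)) else 0 := by
  set eu := eFun m k jJ aD u with heu
  set ev := eFun m k jJ aD v with hev
  set X : ℂ := chi q F * (starRingEnd ℂ) (chi q G) with hX
  have hterm : ∀ (cc : Fin k → ZMod 2) (c' : ZMod 2),
      chi q (F + ((q / 2 : ℕ) : ZMod q) *
          (((∑ α : Fin k, (cc α).val * (u (jJ α)).val) + c'.val * eu : ℕ) : ZMod q)) *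
      (starRingEnd ℂ) (chi q (G + ((q / 2 : ℕ) : ZMod q) *
          (((∑ α : Fin k, (cc α).val * (v (jJ α)).val) + c'.val * ev : ℕ) : ZMod q))) =
      X * ((∏ α : Fin k, ((-1 : ℂ) ^ ((u (jJ α)).val + (v (jJ α)).val)) ^ ((cc α).val)) *
           ((-1 : ℂ) ^ (eu + ev)) ^ (c'.val)) := by
    intro cc c'
    rw [chi_add, chi_add, chi_half q hq, chi_half q hq, map_mul]
    rw [show (starRingEnd ℂ) ((-1 : ℂ) ^ ((∑ α : Fin k, (cc α).val * (v (jJ α)).val) + c'.val * ev))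
        = (-1 : ℂ) ^ ((∑ α : Fin k, (cc α).val * (v (jJ α)).val) + c'.val * ev) from by simp]
    rw [show ∀ a b x y : ℂ, a * x * (b * y) = (a * b) * (x * y) from fun a b x y => by ring]
    rw [hX]
    congr 1
    rw [← pow_add]
    have hN : ((∑ α : Fin k, (cc α).val * (u (jJ α)).val) + c'.val * eu) +
        ((∑ α : Fin k, (cc α).val * (v (jJ α)).val) + c'.val * ev)
        = (∑ α : Fin k, (cc α).val * ((u (jJ α)).val + (v (jJ α)).val)) + (eu + ev) * c'.val := by
      have hs : ∑ α : Fin k, (cc α).val * ((u (jJ α)).val + (v (jJ α)).val)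
          = (∑ α : Fin k, (cc α).val * (u (jJ α)).val)
            + ∑ α : Fin k, (cc α).val * (v (jJ α)).val := by
        rw [← Finset.sum_add_distrib]
        exact Finset.sum_congr rfl fun α _ => by ring
      rw [hs]; ring
    rw [hN, pow_add, pow_mul]
    congr 1
    rw [← Finset.prod_pow_eq_pow_sum]
    exact Finset.prod_congr rfl fun α _ => by rw [mul_comm, pow_mul]
  simp only [hterm]
  have hfactor : (∑ cc : Fin k → ZMod 2, ∑ c' : ZMod 2,
      X * ((∏ α : Fin k, ((-1 : ℂ) ^ ((u (jJ α)).val + (v (jJ α)).val)) ^ ((cc α).val)) *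
           ((-1 : ℂ) ^ (eu + ev)) ^ (c'.val)))
      = X * ((∑ cc : Fin k → ZMod 2,
            ∏ α : Fin k, ((-1 : ℂ) ^ ((u (jJ α)).val + (v (jJ α)).val)) ^ ((cc α).val)) *
          (∑ c' : ZMod 2, ((-1 : ℂ) ^ (eu + ev)) ^ (c'.val))) := by
    rw [Finset.sum_mul_sum, Finset.mul_sum]
    exact Finset.sum_congr rfl fun cc _ => by rw [Finset.mul_sum]
  rw [hfactor]
  have hc' : (∑ c' : ZMod 2, ((-1 : ℂ) ^ (eu + ev)) ^ (c'.val))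
      = if Even (eu + ev) then (2 : ℂ) else 0 := by
    rw [sum_zmod2]
    rw [show ((0 : ZMod 2)).val = 0 from rfl, show ((1 : ZMod 2)).val = 1 from rfl]
    by_cases he : Even (eu + ev)
    · rw [if_pos he, he.neg_one_pow]; norm_num
    · rw [if_neg he, (Nat.not_even_iff_odd.1 he).neg_one_pow]; norm_num
  have hcc : (∑ cc : Fin k → ZMod 2,
      ∏ α : Fin k, ((-1 : ℂ) ^ ((u (jJ α)).val + (v (jJ α)).val)) ^ ((cc α).val))
      = if (∀ b : Fin k, u (jJ b) = v (jJ b)) then (2 : ℂ) ^ k else 0 := by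
    rw [← Fintype.prod_sum (κ := fun _ : Fin k => ZMod 2)
      (f := fun (α : Fin k) (b : ZMod 2) => ((-1 : ℂ) ^ ((u (jJ α)).val + (v (jJ α)).val)) ^ (b.val))]
    have hα : ∀ α : Fin k, (∑ b : ZMod 2, ((-1 : ℂ) ^ ((u (jJ α)).val + (v (jJ α)).val)) ^ (b.val))
        = if u (jJ α) = v (jJ α) then (2 : ℂ) else 0 := by
      intro α
      rw [sum_zmod2, show ((0 : ZMod 2)).val = 0 from rfl, show ((1 : ZMod 2)).val = 1 from rfl]
      by_cases he : u (jJ α) = v (jJ α)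
      · rw [if_pos he, ((even_val_add_iff _ _).2 he).neg_one_pow]; norm_num
      · rw [if_neg he, (Nat.not_even_iff_odd.1 (fun hc => he ((even_val_add_iff _ _).1 hc))).neg_one_pow]
        norm_num
    rw [Finset.prod_congr rfl fun α _ => hα α]
    by_cases hall : ∀ b : Fin k, u (jJ b) = v (jJ b)
    · rw [if_pos hall, Finset.prod_congr rfl fun α _ => if_pos (hall α), Finset.prod_const]
      simp
    · rw [if_neg hall]
      push_neg at hall
      obtain ⟨b0, hb0⟩ := hall
      exact Finset.prod_eq_zero (Finset.mem_univ b0) (if_neg hb0)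
  rw [hc', hcc]
  by_cases h1 : ∀ b : Fin k, u (jJ b) = v (jJ b) <;> by_cases h2 : Even (eu + ev) <;>
    simp [h1, h2] <;> ring

lemma polyVec_chi (q m : ℕ) (g : (Fin m → ZMod 2) → ZMod q) (i : ℕ) :
    polyVec m g i = chi q (g (bits m i)) := rfl

lemma sum_swap4 {ι₁ ι₂ : Type*} [Fintype ι₁] [Fintype ι₂] (n : ℕ) (P : ℕ → ℕ → Prop)
    [∀ i j, Decidable (P i j)] (F : ι₁ → ι₂ → ℕ → ℕ → ℂ) :
    (∑ a : ι₁, ∑ b : ι₂, ∑ i ∈ Finset.range n, ∑ j ∈ Finset.range n,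
        if P i j then F a b i j else 0)
    = ∑ i ∈ Finset.range n, ∑ j ∈ Finset.range n,
        if P i j then (∑ a : ι₁, ∑ b : ι₂, F a b i j) else 0 := by
  calc (∑ a : ι₁, ∑ b : ι₂, ∑ i ∈ Finset.range n, ∑ j ∈ Finset.range n,
        if P i j then F a b i j else 0)
      = ∑ a : ι₁, ∑ i ∈ Finset.range n, ∑ b : ι₂, ∑ j ∈ Finset.range n,
        if P i j then F a b i j else 0 :=
        Finset.sum_congr rfl fun a _ => Finset.sum_comm
    _ = ∑ i ∈ Finset.range n, ∑ a : ι₁, ∑ b : ι₂, ∑ j ∈ Finset.range n,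
        if P i j then F a b i j else 0 := Finset.sum_comm
    _ = ∑ i ∈ Finset.range n, ∑ a : ι₁, ∑ j ∈ Finset.range n, ∑ b : ι₂,
        if P i j then F a b i j else 0 :=
        Finset.sum_congr rfl fun i _ => Finset.sum_congr rfl fun a _ => Finset.sum_comm
    _ = ∑ i ∈ Finset.range n, ∑ j ∈ Finset.range n, ∑ a : ι₁, ∑ b : ι₂,
        if P i j then F a b i j else 0 :=
        Finset.sum_congr rfl fun i _ => Finset.sum_comm
    _ = _ := by
        refine Finset.sum_congr rfl fun i _ => Finset.sum_congr rfl fun j _ => ?_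
        by_cases hP : P i j
        · simp [hP]
        · simp [hP]

end AuxLemmas

set_option maxHeartbeats 2000000 in
/-- Theorem 2: if every restriction `f|_{x=d}` has the form
`(q/2)·∑_α x_{π_d(α)}x_{π_d(α+1)} + ∑_α c_{d,α} x_{i_α} + c_d`, with `a_d = π_d(0)` or
`π_d(m-k-1)`, then the `2^{k+1}` polyphase vectors associated with the functions
`f + (q/2)(∑_α c_α x_{j_α} + c'·e)`, as `(c, c')` ranges over `ℤ₂^{k+1}`, form a
complementary set of size `2^{k+1}`. -/
theorem stmt_3 (q m k : ℕ) (hq : Even q) (hq1 : 0 < q) (hkm : k ≤ m)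
    (iI : ℕ → Fin m) (jJ : Fin k → Fin m)
    (hiInj : Set.InjOn iI (Set.Iio (m - k))) (hjInj : Function.Injective jJ)
    (hdisj : ∀ a < m - k, ∀ b : Fin k, iI a ≠ jJ b)
    (hcover : ∀ v : Fin m, (∃ a < m - k, iI a = v) ∨ ∃ b : Fin k, jJ b = v)
    (f : (Fin m → ZMod 2) → ZMod q)
    (π : (Fin k → ZMod 2) → ℕ → Fin m)
    (hπInj : ∀ d, Set.InjOn (π d) (Set.Iio (m - k)))
    (hπrange : ∀ d, (π d) '' Set.Iio (m - k) = iI '' Set.Iio (m - k))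
    (c : (Fin k → ZMod 2) → ℕ → ZMod q) (c0 : (Fin k → ZMod 2) → ZMod q)
    (hf : ∀ d : Fin k → ZMod 2, ∀ y : Fin m → ZMod 2, (∀ b : Fin k, y (jJ b) = d b) →
      f y = ((q / 2 : ℕ) : ZMod q) *
              ((∑ α ∈ Finset.range (m - k - 1),
                  (y (π d α)).val * (y (π d (α + 1))).val : ℕ) : ZMod q)
            + (∑ α ∈ Finset.range (m - k), c d α * ((y (iI α)).val : ZMod q)) + c0 d)
    (aD : (Fin k → ZMod 2) → Fin m)
    (haD : ∀ d, aD d = π d 0 ∨ aD d = π d (m - k - 1))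
    (ℓ : ℤ) (hℓ : ℓ ≠ 0) :
    ∑ cc : Fin k → ZMod 2, ∑ c' : ZMod 2,
      autoCorr (2 ^ m)
        (polyVec m (fun y => f y + ((q / 2 : ℕ) : ZMod q) *
          (((∑ α : Fin k, (cc α).val * (y (jJ α)).val) + c'.val * eFun m k jJ aD y : ℕ) : ZMod q)))
        ℓ = 0 := by
  classical
  haveI : NeZero q := ⟨hq1.ne'⟩
  -- Normalize the path permutations so that `aD d` is always the 0-th vertex.
  have hrev : ∀ d : Fin k → ZMod 2, ∃ σ : ℕ → Fin m,
      Set.InjOn σ (Set.Iio (m - k)) ∧ σ '' Set.Iio (m - k) = iI '' Set.Iio (m - k) ∧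
      aD d = σ 0 ∧
      ∀ y : Fin m → ZMod 2,
        (∑ α ∈ Finset.range (m - k - 1), (y (σ α)).val * (y (σ (α + 1))).val)
          = ∑ α ∈ Finset.range (m - k - 1), (y (π d α)).val * (y (π d (α + 1))).val := by
    intro d
    rcases haD d with h | h
    · exact ⟨π d, hπInj d, hπrange d, h, fun y => rfl⟩
    · refine ⟨fun α => π d (m - k - 1 - α), ?_, ?_, by simpa using h,
        fun y => rev_quad (m - k) (π d) y⟩
      · intro a ha b hb hab
        simp only [Set.mem_Iio] at ha hb
        have h1 : m - k - 1 - a ∈ Set.Iio (m - k) := by simp only [Set.mem_Iio]; omega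
        have h2 : m - k - 1 - b ∈ Set.Iio (m - k) := by simp only [Set.mem_Iio]; omega
        have := hπInj d h1 h2 hab
        omega
      · rw [← hπrange d]
        ext t
        simp only [Set.mem_image, Set.mem_Iio]
        constructor
        · rintro ⟨a, ha, rfl⟩; exact ⟨m - k - 1 - a, by omega, rfl⟩
        · rintro ⟨a, ha, rfl⟩
          exact ⟨m - k - 1 - a, by omega, by congr 1; omega⟩
  choose π₂ h2Inj h2range h2aD h2Q using hrev
  have hf2 : ∀ d : Fin k → ZMod 2, ∀ y : Fin m → ZMod 2, (∀ b : Fin k, y (jJ b) = d b) →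
      f y = ((q / 2 : ℕ) : ZMod q) *
              ((∑ α ∈ Finset.range (m - k - 1),
                  (y (π₂ d α)).val * (y (π₂ d (α + 1))).val : ℕ) : ZMod q)
            + (∑ α ∈ Finset.range (m - k), c d α * ((y (iI α)).val : ZMod q)) + c0 d := by
    intro d y hy
    rw [h2Q d y]
    exact hf d y hy
  -- the master involution facts
  have master : ∀ i j : ℕ, i < 2 ^ m → j < 2 ^ m → (i : ℤ) = (j : ℤ) + ℓ →
      (∀ b : Fin k, bits m i (jJ b) = bits m j (jJ b)) →
      Even (eFun m k jJ aD (bits m i) + eFun m k jJ aD (bits m j)) →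
      ((gg m k jJ π₂ (i, j)).1 < 2 ^ m ∧ (gg m k jJ π₂ (i, j)).2 < 2 ^ m ∧
        ((gg m k jJ π₂ (i, j)).1 : ℤ) = ((gg m k jJ π₂ (i, j)).2 : ℤ) + ℓ ∧
        (∀ b : Fin k, bits m (gg m k jJ π₂ (i, j)).1 (jJ b)
          = bits m (gg m k jJ π₂ (i, j)).2 (jJ b)) ∧
        Even (eFun m k jJ aD (bits m (gg m k jJ π₂ (i, j)).1)
          + eFun m k jJ aD (bits m (gg m k jJ π₂ (i, j)).2))) ∧
      gg m k jJ π₂ (gg m k jJ π₂ (i, j)) = (i, j) ∧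
      gg m k jJ π₂ (i, j) ≠ (i, j) ∧
      chi q (f (bits m i)) * (starRingEnd ℂ) (chi q (f (bits m j))) +
        chi q (f (bits m (gg m k jJ π₂ (i, j)).1)) *
          (starRingEnd ℂ) (chi q (f (bits m (gg m k jJ π₂ (i, j)).2))) = 0 := by
    intro i j hi hj hP hC1 hC2
    -- agreement at the distinguished vertex
    have h_aD : bits m i (aD (ddp m k jJ (i, j))) = bits m j (aD (ddp m k jJ (i, j))) := by
      have e1 := eFun_eq m k jJ aD (bits m i)
      have e2 := eFun_eq m k jJ aD (bits m j)
      have hdd2 : (fun b => bits m j (jJ b)) = (fun b => bits m i (jJ b)) :=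
        funext fun b => (hC1 b).symm
      rw [e1, e2, hdd2] at hC2
      exact (even_val_add_iff _ _).1 hC2
    -- existence of a differing vertex
    have hex : ∃ α, α < m - k ∧
        bits m i (π₂ (ddp m k jJ (i, j)) α) ≠ bits m j (π₂ (ddp m k jJ (i, j)) α) := by
      by_contra hc
      push_neg at hc
      have hall : ∀ t : Fin m, bits m i t = bits m j t := by
        intro t
        rcases hcover t with ⟨a, ha, rfl⟩ | ⟨b, rfl⟩
        · have hmem : iI a ∈ iI '' Set.Iio (m - k) := ⟨a, Set.mem_Iio.2 ha, rfl⟩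
          rw [← h2range (ddp m k jJ (i, j))] at hmem
          obtain ⟨α, hα, hαeq⟩ := hmem
          rw [← hαeq]
          exact hc α (Set.mem_Iio.1 hα)
        · exact hC1 b
      have hij : i = j := bits_eq_iff m i j hi hj hall
      rw [hij] at hP
      exact hℓ (by omega)
    have hspec := a0_spec m k jJ π₂ (i, j) hex
    have hAlt : a0 m k jJ π₂ (i, j) < m - k := hspec.1
    have hAne : bits m i (π₂ (ddp m k jJ (i, j)) (a0 m k jJ π₂ (i, j)))
        ≠ bits m j (π₂ (ddp m k jJ (i, j)) (a0 m k jJ π₂ (i, j))) := hspec.2.1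
    have hAmin : ∀ β < a0 m k jJ π₂ (i, j),
        bits m i (π₂ (ddp m k jJ (i, j)) β) = bits m j (π₂ (ddp m k jJ (i, j)) β) :=
      hspec.2.2
    have hA0 : 0 < a0 m k jJ π₂ (i, j) := by
      rcases Nat.eq_zero_or_pos (a0 m k jJ π₂ (i, j)) with h0 | h
      · exfalso
        apply hAne
        rw [h0, ← h2aD (ddp m k jJ (i, j))]
        exact h_aD
      · exact h
    set A := a0 m k jJ π₂ (i, j) with hA
    set P0 := π₂ (ddp m k jJ (i, j)) (A - 1) with hP0
    have hp0lt : A - 1 < m - k := by omega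
    have hp0_iI : ∃ a, a < m - k ∧ iI a = P0 := by
      have hmem : P0 ∈ π₂ (ddp m k jJ (i, j)) '' Set.Iio (m - k) :=
        ⟨A - 1, Set.mem_Iio.2 hp0lt, rfl⟩
      rw [h2range] at hmem
      obtain ⟨a, ha, haeq⟩ := hmem
      exact ⟨a, Set.mem_Iio.1 ha, haeq⟩
    obtain ⟨aix, haix, haixeq⟩ := hp0_iI
    have hp0_ne_jJ : ∀ b : Fin k, jJ b ≠ P0 :=
      fun b hb => hdisj aix haix b (by rw [haixeq, hb])
    have hxor_at : ∀ x : ℕ, bits m (x ^^^ 2 ^ P0.val) P0 = bits m x P0 + 1 := by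
      intro x
      rw [bits_xor m x P0 P0, if_pos rfl]
    have hxor_ne : ∀ (x : ℕ) (t : Fin m), t ≠ P0 →
        bits m (x ^^^ 2 ^ P0.val) t = bits m x t := by
      intro x t ht
      rw [bits_xor m x P0 t, if_neg ht, add_zero]
    have hbit_eq : bits m i P0 = bits m j P0 := hAmin (A - 1) (by omega)
    have hne_p0 : ∀ β : ℕ, β < m - k → β ≠ A - 1 → π₂ (ddp m k jJ (i, j)) β ≠ P0 := by
      intro β hβ hne hcontra
      exact hne (h2Inj (ddp m k jJ (i, j)) (Set.mem_Iio.2 hβ) (Set.mem_Iio.2 hp0lt) hcontra)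
    have hgg : gg m k jJ π₂ (i, j) = (i ^^^ 2 ^ P0.val, j ^^^ 2 ^ P0.val) := rfl
    have hi' : i ^^^ 2 ^ P0.val < 2 ^ m :=
      Nat.xor_lt_two_pow hi (Nat.pow_lt_pow_right one_lt_two P0.isLt)
    have hj' : j ^^^ 2 ^ P0.val < 2 ^ m :=
      Nat.xor_lt_two_pow hj (Nat.pow_lt_pow_right one_lt_two P0.isLt)
    have htb : i.testBit P0.val = j.testBit P0.val := (bits_eq_iff_testBit m i j P0).1 hbit_eq
    have hP' : ((i ^^^ 2 ^ P0.val : ℕ) : ℤ) = ((j ^^^ 2 ^ P0.val : ℕ) : ℤ) + ℓ := by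
      rw [xor_flip_int m P0.val i hi P0.isLt, xor_flip_int m P0.val j hj P0.isLt, htb]
      linarith [hP]
    have hC1' : ∀ b : Fin k,
        bits m (i ^^^ 2 ^ P0.val) (jJ b) = bits m (j ^^^ 2 ^ P0.val) (jJ b) := by
      intro b
      rw [hxor_ne i _ (hp0_ne_jJ b), hxor_ne j _ (hp0_ne_jJ b)]
      exact hC1 b
    have hdd' : ddp m k jJ (i ^^^ 2 ^ P0.val, j ^^^ 2 ^ P0.val) = ddp m k jJ (i, j) := by
      funext b
      show bits m (i ^^^ 2 ^ P0.val) (jJ b) = bits m i (jJ b)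
      exact hxor_ne i _ (hp0_ne_jJ b)
    have haD' : bits m (i ^^^ 2 ^ P0.val) (aD (ddp m k jJ (i, j)))
        = bits m (j ^^^ 2 ^ P0.val) (aD (ddp m k jJ (i, j))) := by
      rw [bits_xor m i P0 _, bits_xor m j P0 _, h_aD]
    have hC2' : Even (eFun m k jJ aD (bits m (i ^^^ 2 ^ P0.val))
        + eFun m k jJ aD (bits m (j ^^^ 2 ^ P0.val))) := by
      rw [eFun_eq, eFun_eq]
      have h1 : (fun b => bits m (i ^^^ 2 ^ P0.val) (jJ b)) = ddp m k jJ (i, j) := hdd'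
      have h2 : (fun b => bits m (j ^^^ 2 ^ P0.val) (jJ b)) = ddp m k jJ (i, j) := by
        funext b
        rw [← hC1' b]
        exact congrFun h1 b
      rw [h1, h2]
      exact (even_val_add_iff _ _).2 haD'
    have ha0' : a0 m k jJ π₂ (i ^^^ 2 ^ P0.val, j ^^^ 2 ^ P0.val) = A := by
      refine a0_congr m k jJ π₂ _ _ hdd' fun α => ?_
      rw [hdd', bits_xor m i P0 _, bits_xor m j P0 _]
      exact add_left_inj _
    have hgg2 : gg m k jJ π₂ (gg m k jJ π₂ (i, j)) = (i, j) := by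
      have hexp : gg m k jJ π₂ (i ^^^ 2 ^ P0.val, j ^^^ 2 ^ P0.val)
          = ((i ^^^ 2 ^ P0.val) ^^^
              2 ^ (π₂ (ddp m k jJ (i ^^^ 2 ^ P0.val, j ^^^ 2 ^ P0.val))
                (a0 m k jJ π₂ (i ^^^ 2 ^ P0.val, j ^^^ 2 ^ P0.val) - 1)).val,
             (j ^^^ 2 ^ P0.val) ^^^
              2 ^ (π₂ (ddp m k jJ (i ^^^ 2 ^ P0.val, j ^^^ 2 ^ P0.val))
                (a0 m k jJ π₂ (i ^^^ 2 ^ P0.val, j ^^^ 2 ^ P0.val) - 1)).val) := rfl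
      have hxx : ∀ x t : ℕ, (x ^^^ t) ^^^ t = x := fun x t => by
        rw [Nat.xor_assoc, Nat.xor_self, Nat.xor_zero]
      rw [hgg, hexp, hdd', ha0', ← hP0, hxx, hxx]
    have hggne : gg m k jJ π₂ (i, j) ≠ (i, j) := by
      rw [hgg]
      intro hcon
      have h1 : i ^^^ 2 ^ P0.val = i := congrArg Prod.fst hcon
      have h2 := congrArg (fun x => Nat.testBit x P0.val) h1
      simp [Nat.testBit_xor, Nat.testBit_two_pow_self] at h2
    -- the four restricted representations
    have hfu := hf2 (ddp m k jJ (i, j)) (bits m i) (fun b => rfl)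
    have hfv := hf2 (ddp m k jJ (i, j)) (bits m j) (fun b => (hC1 b).symm)
    have hfu' := hf2 (ddp m k jJ (i, j)) (bits m (i ^^^ 2 ^ P0.val))
      (fun b => hxor_ne i _ (hp0_ne_jJ b))
    have hfv' := hf2 (ddp m k jJ (i, j)) (bits m (j ^^^ 2 ^ P0.val))
      (fun b => by rw [hxor_ne j _ (hp0_ne_jJ b)]; exact (hC1 b).symm)
    set Qu := ∑ α ∈ Finset.range (m - k - 1),
      (bits m i (π₂ (ddp m k jJ (i, j)) α)).val *
      (bits m i (π₂ (ddp m k jJ (i, j)) (α + 1))).val with hQu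
    set Qv := ∑ α ∈ Finset.range (m - k - 1),
      (bits m j (π₂ (ddp m k jJ (i, j)) α)).val *
      (bits m j (π₂ (ddp m k jJ (i, j)) (α + 1))).val with hQv
    set Qu' := ∑ α ∈ Finset.range (m - k - 1),
      (bits m (i ^^^ 2 ^ P0.val) (π₂ (ddp m k jJ (i, j)) α)).val *
      (bits m (i ^^^ 2 ^ P0.val) (π₂ (ddp m k jJ (i, j)) (α + 1))).val with hQu'
    set Qv' := ∑ α ∈ Finset.range (m - k - 1),
      (bits m (j ^^^ 2 ^ P0.val) (π₂ (ddp m k jJ (i, j)) α)).val *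
      (bits m (j ^^^ 2 ^ P0.val) (π₂ (ddp m k jJ (i, j)) (α + 1))).val with hQv'
    set Lu := ∑ α ∈ Finset.range (m - k),
      c (ddp m k jJ (i, j)) α * ((bits m i (iI α)).val : ZMod q) with hLu
    set Lv := ∑ α ∈ Finset.range (m - k),
      c (ddp m k jJ (i, j)) α * ((bits m j (iI α)).val : ZMod q) with hLv
    set Lu' := ∑ α ∈ Finset.range (m - k),
      c (ddp m k jJ (i, j)) α * ((bits m (i ^^^ 2 ^ P0.val) (iI α)).val : ZMod q) with hLu'
    set Lv' := ∑ α ∈ Finset.range (m - k),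
      c (ddp m k jJ (i, j)) α * ((bits m (j ^^^ 2 ^ P0.val) (iI α)).val : ZMod q) with hLv'
    have hchi_neg : ∀ N : ℕ,
        chi q (-(((q / 2 : ℕ) : ZMod q) * ((N : ℕ) : ZMod q))) = (-1 : ℂ) ^ N := by
      intro N
      rw [← conj_chi, chi_half q hq]
      simp
    have hXX1 : chi q (f (bits m i)) * (starRingEnd ℂ) (chi q (f (bits m j)))
        = (-1 : ℂ) ^ (Qu + Qv) * chi q (Lu - Lv) := by
      rw [chi_sub_conj]
      have hsub : f (bits m i) - f (bits m j)
          = (((q / 2 : ℕ) : ZMod q) * ((Qu : ℕ) : ZMod q)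
            + -(((q / 2 : ℕ) : ZMod q) * ((Qv : ℕ) : ZMod q))) + (Lu - Lv) := by
        rw [hfu, hfv]; ring
      rw [hsub, chi_add, chi_add, chi_half q hq, hchi_neg, pow_add]
    have hXX2 : chi q (f (bits m (i ^^^ 2 ^ P0.val))) *
        (starRingEnd ℂ) (chi q (f (bits m (j ^^^ 2 ^ P0.val))))
        = (-1 : ℂ) ^ (Qu' + Qv') * chi q (Lu' - Lv') := by
      rw [chi_sub_conj]
      have hsub : f (bits m (i ^^^ 2 ^ P0.val)) - f (bits m (j ^^^ 2 ^ P0.val))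
          = (((q / 2 : ℕ) : ZMod q) * ((Qu' : ℕ) : ZMod q)
            + -(((q / 2 : ℕ) : ZMod q) * ((Qv' : ℕ) : ZMod q))) + (Lu' - Lv') := by
        rw [hfu', hfv']; ring
      rw [hsub, chi_add, chi_add, chi_half q hq, hchi_neg, pow_add]
    have hLL : Lu' - Lv' = Lu - Lv := by
      rw [hLu, hLv, hLu', hLv', ← Finset.sum_sub_distrib, ← Finset.sum_sub_distrib]
      refine Finset.sum_congr rfl fun α _ => ?_
      rw [← mul_sub, ← mul_sub]
      congr 1
      by_cases ht : iI α = P0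
      · rw [ht, hxor_at i, hxor_at j, hbit_eq, sub_self, sub_self]
      · rw [hxor_ne i _ ht, hxor_ne j _ ht]
    -- parity
    have hkey : ∑ α ∈ Finset.range (m - k - 1),
        ((bits m (i ^^^ 2 ^ P0.val) (π₂ (ddp m k jJ (i, j)) α)) *
          (bits m (i ^^^ 2 ^ P0.val) (π₂ (ddp m k jJ (i, j)) (α + 1)))
        + (bits m (j ^^^ 2 ^ P0.val) (π₂ (ddp m k jJ (i, j)) α)) *
          (bits m (j ^^^ 2 ^ P0.val) (π₂ (ddp m k jJ (i, j)) (α + 1)))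
        + ((bits m i (π₂ (ddp m k jJ (i, j)) α)) *
            (bits m i (π₂ (ddp m k jJ (i, j)) (α + 1)))
          + (bits m j (π₂ (ddp m k jJ (i, j)) α)) *
            (bits m j (π₂ (ddp m k jJ (i, j)) (α + 1))))) = 1 := by
      have hmem : A - 1 ∈ Finset.range (m - k - 1) := Finset.mem_range.2 (by omega)
      rw [Finset.sum_eq_single (A - 1)]
      · -- value at A - 1
        have he1 : A - 1 + 1 = A := by omega
        rw [he1, ← hP0, hxor_at i, hxor_at j, hbit_eq]
        have hA_ne : π₂ (ddp m k jJ (i, j)) A ≠ P0 := hne_p0 A (by omega) (by omega)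
        rw [hxor_ne i _ hA_ne, hxor_ne j _ hA_ne]
        have hfin : ∀ a z₁ z₂ : ZMod 2, z₁ ≠ z₂ →
            (a + 1) * z₁ + (a + 1) * z₂ + (a * z₁ + a * z₂) = 1 := by decide
        exact hfin _ _ _ hAne
      · -- other indices vanish
        intro β hβ hβne
        simp only [Finset.mem_range] at hβ
        have hβp0 : π₂ (ddp m k jJ (i, j)) β ≠ P0 := hne_p0 β (by omega) hβne
        by_cases hc : β + 1 = A - 1
        · have hsucc_p0 : π₂ (ddp m k jJ (i, j)) (β + 1) = P0 := by rw [hc, hP0]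
          rw [hxor_ne i _ hβp0, hxor_ne j _ hβp0, hsucc_p0, hxor_at i, hxor_at j,
            hbit_eq, hAmin β (by omega)]
          have hfin : ∀ w a : ZMod 2,
              w * (a + 1) + w * (a + 1) + (w * a + w * a) = 0 := by decide
          exact hfin _ _
        · have hsucc_ne : π₂ (ddp m k jJ (i, j)) (β + 1) ≠ P0 :=
            hne_p0 (β + 1) (by omega) hc
          rw [hxor_ne i _ hβp0, hxor_ne j _ hβp0, hxor_ne i _ hsucc_ne, hxor_ne j _ hsucc_ne]
          have hfin : ∀ x y : ZMod 2, x + y + (x + y) = 0 := by decide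
          exact hfin _ _
      · intro habs
        exact absurd hmem habs
    have hcast : ((Qu' + Qv' : ℕ) : ZMod 2) = ((Qu + Qv + 1 : ℕ) : ZMod 2) := by
      rw [hQu, hQv, hQu', hQv']
      push_cast [ZMod.natCast_val, ZMod.cast_id]
      rw [Finset.sum_add_distrib, Finset.sum_add_distrib] at hkey
      rw [Finset.sum_add_distrib] at hkey
      have h2z : ∀ x : ZMod 2, x + x = 0 := by decide
      set Su' := ∑ α ∈ Finset.range (m - k - 1),
        (bits m (i ^^^ 2 ^ P0.val) (π₂ (ddp m k jJ (i, j)) α)) *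
        (bits m (i ^^^ 2 ^ P0.val) (π₂ (ddp m k jJ (i, j)) (α + 1)))
      set Sv' := ∑ α ∈ Finset.range (m - k - 1),
        (bits m (j ^^^ 2 ^ P0.val) (π₂ (ddp m k jJ (i, j)) α)) *
        (bits m (j ^^^ 2 ^ P0.val) (π₂ (ddp m k jJ (i, j)) (α + 1)))
      set Su := ∑ α ∈ Finset.range (m - k - 1),
        (bits m i (π₂ (ddp m k jJ (i, j)) α)) * (bits m i (π₂ (ddp m k jJ (i, j)) (α + 1)))
      set Sv := ∑ α ∈ Finset.range (m - k - 1),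
        (bits m j (π₂ (ddp m k jJ (i, j)) α)) * (bits m j (π₂ (ddp m k jJ (i, j)) (α + 1)))
      show Su' + Sv' = Su + Sv + 1
      calc Su' + Sv' = Su' + Sv' + ((Su + Sv) + (Su + Sv)) := by rw [h2z, add_zero]
        _ = (Su' + Sv' + (Su + Sv)) + (Su + Sv) := by ring
        _ = 1 + (Su + Sv) := by rw [hkey]
        _ = Su + Sv + 1 := by ring
    have hpow : (-1 : ℂ) ^ (Qu' + Qv') = -(-1 : ℂ) ^ (Qu + Qv) := by
      rw [neg_one_pow_congr' (Qu' + Qv') (Qu + Qv + 1) hcast, pow_succ]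
      ring
    refine ⟨⟨hi', hj', hP', hC1', hC2'⟩, hgg2, hggne, ?_⟩
    rw [hgg]
    show chi q (f (bits m i)) * (starRingEnd ℂ) (chi q (f (bits m j))) +
      chi q (f (bits m (i ^^^ 2 ^ P0.val))) *
        (starRingEnd ℂ) (chi q (f (bits m (j ^^^ 2 ^ P0.val)))) = 0
    rw [hXX1, hXX2, hLL, hpow]
    ring
  -- assemble the sum
  simp only [autoCorr, crossCorr, polyVec_chi q m]
  refine Eq.trans (sum_swap4 (2 ^ m) _ _) ?_
  simp only [pair_sum q k hq jJ aD]
  simp only [← ite_and]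
  rw [← Finset.sum_product']
  rw [← Finset.sum_filter]
  refine Finset.sum_involution (fun p _ => gg m k jJ π₂ p) ?_ ?_ ?_ ?_
  · intro p hp
    rw [Finset.mem_filter, Finset.mem_product, Finset.mem_range, Finset.mem_range] at hp
    obtain ⟨⟨hp1, hp2⟩, hpP, hpC1, hpC2⟩ := hp
    obtain ⟨_, _, _, hzero⟩ := master p.1 p.2 hp1 hp2 hpP hpC1 hpC2
    have h0 : chi q (f (bits m p.1)) * (starRingEnd ℂ) (chi q (f (bits m p.2))) +
        chi q (f (bits m (gg m k jJ π₂ p).1)) *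
          (starRingEnd ℂ) (chi q (f (bits m (gg m k jJ π₂ p).2))) = 0 := hzero
    rw [← mul_add, h0, mul_zero]
  · intro p hp _
    rw [Finset.mem_filter, Finset.mem_product, Finset.mem_range, Finset.mem_range] at hp
    obtain ⟨⟨hp1, hp2⟩, hpP, hpC1, hpC2⟩ := hp
    exact (master p.1 p.2 hp1 hp2 hpP hpC1 hpC2).2.2.1
  · intro p hp
    rw [Finset.mem_filter, Finset.mem_product, Finset.mem_range, Finset.mem_range] at hp
    obtain ⟨⟨hp1, hp2⟩, hpP, hpC1, hpC2⟩ := hp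
    obtain ⟨⟨h1, h2, h3, h4, h5⟩, _, _, _⟩ := master p.1 p.2 hp1 hp2 hpP hpC1 hpC2
    rw [Finset.mem_filter, Finset.mem_product, Finset.mem_range, Finset.mem_range]
    exact ⟨⟨h1, h2⟩, h3, h4, h5⟩
  · intro p hp
    rw [Finset.mem_filter, Finset.mem_product, Finset.mem_range, Finset.mem_range] at hp
    obtain ⟨⟨hp1, hp2⟩, hpP, hpC1, hpC2⟩ := hp
    exact (master p.1 p.2 hp1 hp2 hpP hpC1 hpC2).2.1
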